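/- Soundness of Equivalence Checking: for all programs P, Q of the language L, symbolic contexts G, R over 𝕍, and maps φ : (𝕍, ⊕) → (ℝ, ⊕), if (X_∅, G, R, P) ↪↓ (G_P, R_P), (X_∅, G, R, Q) ↪↓ (G_Q, R_Q), the symbolic outputs are equal (G_P = G_Q and R_P = R_Q as symbolic terms), (φ(G), φ(R), P) ↓ (G_P', R_P'), and (φ(G), φ(R), Q) ↓ (G_Q', R_Q'), then G_P' = G_Q' and R_P' = R_Q'. -/
import Mathlib


namespace Volta

/-- Statements of the language `L` of structured-CTAs.  Constants are drawn
from a type `C`, registers from `Reg`, shared-memory addresses from `Addr`,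
and thread IDs from `TID`. -/
inductive Stmt (C Reg Addr TID : Type) : Type where
  | const (r : Reg) (c : C)
  | binop (r r₁ r₂ : Reg)
  | copy (r r' : Reg)
  | read (r : Reg) (g : Addr)
  | write (g : Addr) (r : Reg)
  | sync (I : Set TID)

/-- A thread program: a finite sequence of statements ending in `return`. -/
inductive ThreadProg (C Reg Addr TID : Type) : Type where
  | ret
  | seq (s : Stmt C Reg Addr TID) (T : ThreadProg C Reg Addr TID)

/-- A configuration: shared memory `G`, register files `R`, program `P`. -/
structure Config (Val C Reg Addr TID : Type) : Type where
  G : Addr → Val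
  R : TID → Reg → Val
  P : TID → ThreadProg C Reg Addr TID

/-- Memory-event contexts: for each address, per reader the set of threads
that have not synchronized with that read, and the last writer together with
the set of threads that have not synchronized with that write. -/
abbrev MemEvs (Addr TID : Type) : Type :=
  Addr → (TID → Set TID) × (TID × Set TID)

variable {Val C Reg Addr TID : Type}

/-- Thread `i` has synchronized with all readers as required. -/
def noRacingRd (i : TID) (rd : TID → Set TID) : Prop :=
  ∀ j, i = j ∨ i ∉ rd j

/-- Thread `i` is, or has synchronized with, the last writer as required. -/
def noRacingWr (i : TID) (wr : TID × Set TID) : Prop :=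
  i = wr.1 ∨ i ∉ wr.2

open Classical in
/-- `sync I` removes `I` from the recorded unsynchronized sets belonging to
threads of `I`. -/
noncomputable def syncMem (I : Set TID) (X : MemEvs Addr TID) : MemEvs Addr TID :=
  fun g =>
    (fun i => if i ∈ I then (X g).1 i \ I else (X g).1 i,
     if (X g).2.1 ∈ I then ((X g).2.1, (X g).2.2 \ I) else (X g).2)

/-- The initial memory-event context `X_∅`, whose recorded unsynchronized sets
are all empty (the choice of the recorded "last writer" `t₀` is arbitrary). -/
def emptyMemEvs (t₀ : TID) : MemEvs Addr TID :=
  fun _ => (fun _ => (∅ : Set TID), (t₀, (∅ : Set TID)))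

section Dynamics

variable [DecidableEq Reg] [DecidableEq Addr] [DecidableEq TID]
variable (op : Val → Val → Val) (κ : C → Val)

/-- Thread-level unchecked small-step relation. -/
inductive TStep :
    (Addr → Val) → (Reg → Val) → ThreadProg C Reg Addr TID →
    (Addr → Val) → (Reg → Val) → ThreadProg C Reg Addr TID → Prop where
  | const {G : Addr → Val} {R : Reg → Val} {r : Reg} {c : C} {T} :
      TStep G R (.seq (.const r c) T) G (Function.update R r (κ c)) T
  | binop {G : Addr → Val} {R : Reg → Val} {r r₁ r₂ : Reg} {T} :
      TStep G R (.seq (.binop r r₁ r₂) T) G (Function.update R r (op (R r₁) (R r₂))) T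
  | copy {G : Addr → Val} {R : Reg → Val} {r r' : Reg} {T} :
      TStep G R (.seq (.copy r r') T) G (Function.update R r (R r')) T
  | read {G : Addr → Val} {R : Reg → Val} {r : Reg} {g : Addr} {T} :
      TStep G R (.seq (.read r g) T) G (Function.update R r (G g)) T
  | write {G : Addr → Val} {R : Reg → Val} {g : Addr} {r : Reg} {T} :
      TStep G R (.seq (.write g r) T) (Function.update G g (R r)) R T

/-- Top-level unchecked small-step relation `→`:
rule `Schd` advances any single thread not blocked at a `sync`, and rule
`Sync`, when every thread of `I` is either at `sync I` or at `return`,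
simultaneously advances all threads of `I` past their `sync`. -/
inductive Step : Config Val C Reg Addr TID → Config Val C Reg Addr TID → Prop where
  | schd {c : Config Val C Reg Addr TID} {i : TID} {G' : Addr → Val}
      {R' : Reg → Val} {T' : ThreadProg C Reg Addr TID} :
      TStep op κ c.G (c.R i) (c.P i) G' R' T' →
      Step c ⟨G', Function.update c.R i R', Function.update c.P i T'⟩
  | sync {c : Config Val C Reg Addr TID} {I : Set TID}
      {P' : TID → ThreadProg C Reg Addr TID} :
      (∀ i ∉ I, P' i = c.P i) →
      (∀ i ∈ I, (c.P i = .ret ∧ P' i = .ret) ∨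
        ∃ T, c.P i = .seq (.sync I) T ∧ P' i = T) →
      Step c ⟨c.G, c.R, P'⟩

/-- `→*`: reflexive-transitive closure of the unchecked step relation. -/
def Steps : Config Val C Reg Addr TID → Config Val C Reg Addr TID → Prop :=
  Relation.ReflTransGen (Step op κ)

/-- Result of a checked thread-level step: a new configuration or the error `⊥`. -/
inductive CTRes (Val C Reg Addr TID : Type) : Type where
  | ok (X : MemEvs Addr TID) (G : Addr → Val) (R : Reg → Val)
      (T : ThreadProg C Reg Addr TID)
  | err

/-- Thread-level checked small-step relation `↪ᵢ`: a read by thread `i`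
updates the reader entry of `i` to the set of all TIDs and requires
`noRacingWr`; a write by `i` requires both `noRacingRd` and `noRacingWr` and
sets the writer record to `(i, univ)`; a read or write whose side condition
fails steps to the error `⊥`. -/
inductive CTStep (i : TID) :
    MemEvs Addr TID → (Addr → Val) → (Reg → Val) → ThreadProg C Reg Addr TID →
    CTRes Val C Reg Addr TID → Prop where
  | const {X : MemEvs Addr TID} {G : Addr → Val} {R : Reg → Val} {r : Reg} {c : C} {T} :
      CTStep i X G R (.seq (.const r c) T) (.ok X G (Function.update R r (κ c)) T)
  | binop {X : MemEvs Addr TID} {G : Addr → Val} {R : Reg → Val} {r r₁ r₂ : Reg} {T} :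
      CTStep i X G R (.seq (.binop r r₁ r₂) T)
        (.ok X G (Function.update R r (op (R r₁) (R r₂))) T)
  | copy {X : MemEvs Addr TID} {G : Addr → Val} {R : Reg → Val} {r r' : Reg} {T} :
      CTStep i X G R (.seq (.copy r r') T) (.ok X G (Function.update R r (R r')) T)
  | read {X : MemEvs Addr TID} {G : Addr → Val} {R : Reg → Val} {r : Reg} {g : Addr} {T}
      (hw : noRacingWr i (X g).2) :
      CTStep i X G R (.seq (.read r g) T)
        (.ok (Function.update X g (Function.update (X g).1 i (Set.univ : Set TID), (X g).2))
          G (Function.update R r (G g)) T)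
  | write {X : MemEvs Addr TID} {G : Addr → Val} {R : Reg → Val} {g : Addr} {r : Reg} {T}
      (hr : noRacingRd i (X g).1) (hw : noRacingWr i (X g).2) :
      CTStep i X G R (.seq (.write g r) T)
        (.ok (Function.update X g ((X g).1, (i, (Set.univ : Set TID))))
          (Function.update G g (R r)) R T)
  | readBad {X : MemEvs Addr TID} {G : Addr → Val} {R : Reg → Val} {r : Reg} {g : Addr} {T}
      (hw : ¬ noRacingWr i (X g).2) :
      CTStep i X G R (.seq (.read r g) T) .err
  | writeBad {X : MemEvs Addr TID} {G : Addr → Val} {R : Reg → Val} {g : Addr} {r : Reg} {T}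
      (hbad : ¬ noRacingRd i (X g).1 ∨ ¬ noRacingWr i (X g).2) :
      CTStep i X G R (.seq (.write g r) T) .err

/-- A checked configuration: a tuple `(X, G, R, P)` or the error `⊥`. -/
inductive CConfig (Val C Reg Addr TID : Type) : Type where
  | ok (X : MemEvs Addr TID) (c : Config Val C Reg Addr TID)
  | err

/-- Top-level checked small-step relation `↪`. -/
inductive CStep : CConfig Val C Reg Addr TID → CConfig Val C Reg Addr TID → Prop where
  | schd {X : MemEvs Addr TID} {c : Config Val C Reg Addr TID} {i : TID}
      {X' : MemEvs Addr TID} {G' : Addr → Val} {R' : Reg → Val}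
      {T' : ThreadProg C Reg Addr TID} :
      CTStep op κ i X c.G (c.R i) (c.P i) (.ok X' G' R' T') →
      CStep (.ok X c) (.ok X' ⟨G', Function.update c.R i R', Function.update c.P i T'⟩)
  | schdBad {X : MemEvs Addr TID} {c : Config Val C Reg Addr TID} {i : TID} :
      CTStep op κ i X c.G (c.R i) (c.P i) .err →
      CStep (.ok X c) .err
  | sync {X : MemEvs Addr TID} {c : Config Val C Reg Addr TID} {I : Set TID}
      {P' : TID → ThreadProg C Reg Addr TID} :
      (∀ i ∉ I, P' i = c.P i) →
      (∀ i ∈ I, (c.P i = .ret ∧ P' i = .ret) ∨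
        ∃ T, c.P i = .seq (.sync I) T ∧ P' i = T) →
      CStep (.ok X c) (.ok (syncMem I X) ⟨c.G, c.R, P'⟩)

/-- `↪*`: reflexive-transitive closure of the checked step relation. -/
def CSteps : CConfig Val C Reg Addr TID → CConfig Val C Reg Addr TID → Prop :=
  Relation.ReflTransGen (CStep op κ)

/-- A memory access (an unchecked `Schd` step that is a read (`w = false`)
or write (`w = true`) by thread `i` to address `g`). -/
inductive AccStep (i : TID) (g : Addr) :
    Bool → Config Val C Reg Addr TID → Config Val C Reg Addr TID → Prop where
  | read {c : Config Val C Reg Addr TID} {r : Reg} {T : ThreadProg C Reg Addr TID}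
      (h : c.P i = .seq (.read r g) T) :
      AccStep i g false c
        ⟨c.G, Function.update c.R i (Function.update (c.R i) r (c.G g)),
          Function.update c.P i T⟩
  | write {c : Config Val C Reg Addr TID} {r : Reg} {T : ThreadProg C Reg Addr TID}
      (h : c.P i = .seq (.write g r) T) :
      AccStep i g true c
        ⟨Function.update c.G g (c.R i r), c.R, Function.update c.P i T⟩

/-- `P` has a data race: there are two memory accesses by distinct threads to
the same address, at least one a write, and two unchecked traces with a common
prefix after which the first access immediately precedes the second in one
trace and vice versa in the other. -/
def HasDataRace (P : TID → ThreadProg C Reg Addr TID) : Prop :=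
  ∃ (G₀ : Addr → Val) (R₀ : TID → Reg → Val)
    (c c₁ c₁' c₂ c₂' : Config Val C Reg Addr TID)
    (i j : TID) (g : Addr) (wi wj : Bool),
    i ≠ j ∧ (wi = true ∨ wj = true) ∧
    Steps op κ ⟨G₀, R₀, P⟩ c ∧
    AccStep i g wi c c₁ ∧ AccStep j g wj c₁ c₁' ∧
    AccStep j g wj c c₂ ∧ AccStep i g wi c₂ c₂'

/-- `(G, R, P) ↓ (G', R')`: the unchecked dynamics reaches a configuration
with every thread at `return`, with final shared memory `G'` and registers `R'`. -/
def Terminates (c : Config Val C Reg Addr TID)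
    (G' : Addr → Val) (R' : TID → Reg → Val) : Prop :=
  ∃ P', Steps op κ c ⟨G', R', P'⟩ ∧ ∀ i, P' i = ThreadProg.ret

/-- `(X, G, R, P) ↪↓ (G', R')`: the checked dynamics reaches a configuration
with every thread at `return`, with final shared memory `G'` and registers `R'`. -/
def CTerminates (X : MemEvs Addr TID) (c : Config Val C Reg Addr TID)
    (G' : Addr → Val) (R' : TID → Reg → Val) : Prop :=
  ∃ X' P', CSteps op κ (.ok X c) (.ok X' ⟨G', R', P'⟩) ∧ ∀ i, P' i = ThreadProg.ret

end Dynamics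

end Volta

namespace Volta

section Aux
set_option linter.unusedSectionVars false

variable {Val C Reg Addr TID : Type}
variable [DecidableEq Reg] [DecidableEq Addr] [DecidableEq TID]
variable {op : Val → Val → Val} {κ : C → Val}

/-- Thread `i`'s pending read of `g` is doomed. -/
def BadRd (i : TID) (w : TID × Set TID) : Prop := i ≠ w.1 ∧ i ∈ w.2

/-- Thread `i`'s pending write of `g` is doomed. -/
def BadWr (i : TID) (e : (TID → Set TID) × (TID × Set TID)) : Prop :=
  (∃ j, i ≠ j ∧ i ∈ e.1 j) ∨ BadRd i e.2

lemma not_noRacingWr_iff {i : TID} {w : TID × Set TID} :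
    ¬ noRacingWr i w ↔ BadRd i w := by
  simp [noRacingWr, BadRd, not_or]

lemma not_noRacingRd_iff {i : TID} {rd : TID → Set TID} :
    ¬ noRacingRd i rd ↔ ∃ j, i ≠ j ∧ i ∈ rd j := by
  simp [noRacingRd, not_or]

lemma ctstep_det {i : TID} {X : MemEvs Addr TID} {G : Addr → Val} {R : Reg → Val}
    {T : ThreadProg C Reg Addr TID} {z₁ z₂ : CTRes Val C Reg Addr TID}
    (h₁ : CTStep op κ i X G R T z₁) (h₂ : CTStep op κ i X G R T z₂) : z₁ = z₂ := by
  cases h₁ <;> cases h₂ <;> first | rfl | (exfalso; tauto)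

lemma noRacingWr_syncMem {i : TID} {I : Set TID} {X : MemEvs Addr TID} {g : Addr}
    (h : noRacingWr i (X g).2) : noRacingWr i ((syncMem I X) g).2 := by
  unfold syncMem noRacingWr at *
  split
  · rcases h with h | h
    · exact Or.inl h
    · exact Or.inr (fun hc => h hc.1)
  · exact h

lemma noRacingRd_syncMem {i : TID} {I : Set TID} {X : MemEvs Addr TID} {g : Addr}
    (h : noRacingRd i (X g).1) : noRacingRd i ((syncMem I X) g).1 := by
  intro j
  rcases h j with h | h
  · exact Or.inl h
  · right
    unfold syncMem
    simp only
    split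
    · exact fun hc => h hc.1
    · exact h

lemma badRd_syncMem {i : TID} {I : Set TID} {X : MemEvs Addr TID} {g : Addr}
    (hiI : i ∉ I) (h : BadRd i (X g).2) : BadRd i ((syncMem I X) g).2 := by
  obtain ⟨h1, h2⟩ := h
  unfold syncMem
  constructor <;> split <;> simp_all [Set.mem_diff]

lemma badWr_syncMem {i : TID} {I : Set TID} {X : MemEvs Addr TID} {g : Addr}
    (hiI : i ∉ I) (h : BadWr i (X g)) : BadWr i ((syncMem I X) g) := by
  rcases h with ⟨j, hj, hm⟩ | h
  · left
    refine ⟨j, hj, ?_⟩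
    unfold syncMem
    simp only
    split <;> simp_all [Set.mem_diff]
  · exact Or.inr (badRd_syncMem hiI h)

end Aux

end Volta

namespace Volta

section Aux2
set_option linter.unusedSectionVars false

variable {Val C Reg Addr TID : Type}
variable [DecidableEq Reg] [DecidableEq Addr] [DecidableEq TID]
variable {op : Val → Val → Val} {κ : C → Val}

/-- Thread `i` has a pending memory access that is doomed to race. -/
def Stuck (i : TID) (X : MemEvs Addr TID) (c : Config Val C Reg Addr TID) : Prop :=
  (∃ r g T, c.P i = .seq (.read r g) T ∧ BadRd i (X g).2) ∨
  (∃ g r T, c.P i = .seq (.write g r) T ∧ BadWr i (X g))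

lemma stuck_preserved {i : TID} {X X' : MemEvs Addr TID}
    {c c' : Config Val C Reg Addr TID}
    (h : CStep op κ (.ok X c) (.ok X' c')) (hs : Stuck i X c) : Stuck i X' c' := by
  cases h with
  | @schd _ _ i' _ G' R' T' hct =>
    -- first, i' ≠ i
    have hne : i' ≠ i := by
      rintro rfl
      rcases hs with ⟨r, g, T, hp, hb⟩ | ⟨g, r, T, hp, hb⟩
      · rw [hp] at hct
        cases hct with
        | read hw => exact (not_noRacingWr_iff.mpr hb) hw
      · rw [hp] at hct
        cases hct with
        | write hr hw =>
          rcases hb with ⟨j, hj, hm⟩ | hb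
          · exact (not_noRacingRd_iff.mpr ⟨j, hj, hm⟩) hr
          · exact (not_noRacingWr_iff.mpr hb) hw
    have hpi : Function.update c.P i' T' i = c.P i := Function.update_of_ne (Ne.symm hne) _ _
    -- case on the thread step to determine X'
    generalize hp0 : c.P i' = Ti at hct
    cases hct with
    | const =>
      rcases hs with ⟨r, g, T, hp, hb⟩ | ⟨g, r, T, hp, hb⟩
      · exact Or.inl ⟨r, g, T, by dsimp only; rw [hpi, hp], hb⟩
      · exact Or.inr ⟨g, r, T, by dsimp only; rw [hpi, hp], hb⟩
    | binop =>
      rcases hs with ⟨r, g, T, hp, hb⟩ | ⟨g, r, T, hp, hb⟩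
      · exact Or.inl ⟨r, g, T, by dsimp only; rw [hpi, hp], hb⟩
      · exact Or.inr ⟨g, r, T, by dsimp only; rw [hpi, hp], hb⟩
    | copy =>
      rcases hs with ⟨r, g, T, hp, hb⟩ | ⟨g, r, T, hp, hb⟩
      · exact Or.inl ⟨r, g, T, by dsimp only; rw [hpi, hp], hb⟩
      · exact Or.inr ⟨g, r, T, by dsimp only; rw [hpi, hp], hb⟩
    | read hw =>
      rename_i r₀ g₀
      rcases hs with ⟨r, g, T, hp, hb⟩ | ⟨g, r, T, hp, hb⟩
      · refine Or.inl ⟨r, g, T, by dsimp only; rw [hpi, hp], ?_⟩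
        by_cases hg : g = g₀
        · subst hg; simpa using hb
        · rwa [Function.update_of_ne hg]
      · refine Or.inr ⟨g, r, T, by dsimp only; rw [hpi, hp], ?_⟩
        by_cases hg : g = g₀
        · subst hg
          rcases hb with ⟨j, hj, hm⟩ | hb
          · refine Or.inl ⟨j, hj, ?_⟩
            simp only [Function.update_self]
            by_cases hji : j = i'
            · subst hji; simp [Function.update_self]
            · rwa [Function.update_of_ne hji]
          · exact Or.inr (by simpa using hb)
        · rwa [Function.update_of_ne hg]
    | write hr hw =>
      rename_i g₀ r₀
      rcases hs with ⟨r, g, T, hp, hb⟩ | ⟨g, r, T, hp, hb⟩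
      · refine Or.inl ⟨r, g, T, by dsimp only; rw [hpi, hp], ?_⟩
        by_cases hg : g = g₀
        · subst hg
          simp only [Function.update_self]
          exact ⟨Ne.symm hne, Set.mem_univ i⟩
        · rwa [Function.update_of_ne hg]
      · refine Or.inr ⟨g, r, T, by dsimp only; rw [hpi, hp], ?_⟩
        by_cases hg : g = g₀
        · subst hg
          right
          simp only [Function.update_self]
          exact ⟨Ne.symm hne, Set.mem_univ i⟩
        · rwa [Function.update_of_ne hg]
  | @sync _ _ I P' hout hin =>
    have hiI : i ∉ I := by
      intro hiI
      rcases hs with ⟨r, g, T, hp, _⟩ | ⟨g, r, T, hp, _⟩ <;>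
        rcases hin i hiI with ⟨h1, _⟩ | ⟨T', h1, _⟩ <;> rw [hp] at h1 <;> simp_all
    have hpi : P' i = c.P i := hout i hiI
    rcases hs with ⟨r, g, T, hp, hb⟩ | ⟨g, r, T, hp, hb⟩
    · exact Or.inl ⟨r, g, T, by dsimp only; rw [hpi, hp], badRd_syncMem hiI hb⟩
    · exact Or.inr ⟨g, r, T, by dsimp only; rw [hpi, hp], badWr_syncMem hiI hb⟩

lemma err_stuck {X : MemEvs Addr TID} {c : Config Val C Reg Addr TID}
    (h : CStep op κ (.ok X c) .err) : ∃ i, Stuck i X c := by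
  cases h with
  | @schdBad _ _ i hct =>
    refine ⟨i, ?_⟩
    generalize hp : c.P i = Ti at hct
    cases hct with
    | readBad hw =>
      exact Or.inl ⟨_, _, _, hp, not_noRacingWr_iff.mp hw⟩
    | writeBad hbad =>
      refine Or.inr ⟨_, _, _, hp, ?_⟩
      rcases hbad with hb | hb
      · exact Or.inl (not_noRacingRd_iff.mp hb)
      · exact Or.inr (not_noRacingWr_iff.mp hb)

/-- `n`-fold composition of the checked step relation. -/
inductive CStepsN (op : Val → Val → Val) (κ : C → Val) :
    ℕ → CConfig Val C Reg Addr TID → CConfig Val C Reg Addr TID → Prop where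
  | refl (a) : CStepsN op κ 0 a a
  | head {n : ℕ} {a b c : CConfig Val C Reg Addr TID} :
      CStep op κ a b → CStepsN op κ n b c → CStepsN op κ (n + 1) a c

lemma cstepsN_of_csteps {a b : CConfig Val C Reg Addr TID}
    (h : CSteps op κ a b) : ∃ n, CStepsN op κ n a b := by
  induction h using Relation.ReflTransGen.head_induction_on with
  | refl => exact ⟨0, .refl _⟩
  | head hs _ ih => obtain ⟨n, hn⟩ := ih; exact ⟨n + 1, .head hs hn⟩

lemma csteps_of_cstepsN {n : ℕ} {a b : CConfig Val C Reg Addr TID}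
    (h : CStepsN op κ n a b) : CSteps op κ a b := by
  induction h with
  | refl => exact Relation.ReflTransGen.refl
  | head hs _ ih => exact Relation.ReflTransGen.head hs ih

lemma cstepsN_err {n : ℕ} {z : CConfig Val C Reg Addr TID}
    (h : CStepsN op κ n .err z) : z = .err := by
  cases h with
  | refl => rfl
  | head hs _ => cases hs

lemma stuck_stepsN {n : ℕ} {i : TID} {X X' : MemEvs Addr TID}
    {c c' : Config Val C Reg Addr TID}
    (h : CStepsN op κ n (.ok X c) (.ok X' c')) (hs : Stuck i X c) : Stuck i X' c' := by
  induction n generalizing X c with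
  | zero => cases h with | refl => exact hs
  | succ n ih =>
    cases h with
    | head hstep htail =>
      rename_i b
      cases b with
      | err => exact absurd (cstepsN_err htail) (by simp)
      | ok X₁ c₁ => exact ih htail (stuck_preserved hstep hs)

lemma stuck_not_ret {i : TID} {X : MemEvs Addr TID} {c : Config Val C Reg Addr TID}
    (hs : Stuck i X c) : c.P i ≠ .ret := by
  rcases hs with ⟨r, g, T, hp, _⟩ | ⟨g, r, T, hp, _⟩ <;> rw [hp] <;> simp

end Aux2

end Volta

namespace Volta

section Aux3
set_option linter.unusedSectionVars false

variable {Val C Reg Addr TID : Type}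
variable [DecidableEq Reg] [DecidableEq Addr] [DecidableEq TID]
variable {op : Val → Val → Val} {κ : C → Val}

lemma syncMem_comm (I J : Set TID) (X : MemEvs Addr TID) :
    syncMem I (syncMem J X) = syncMem J (syncMem I X) := by
  funext g
  unfold syncMem
  simp only [Prod.mk.injEq]
  constructor
  · funext j
    by_cases hI : j ∈ I <;> by_cases hJ : j ∈ J <;>
      simp [hI, hJ, Set.diff_diff_comm]
  · by_cases hI : (X g).2.1 ∈ I <;> by_cases hJ : (X g).2.1 ∈ J <;>
      simp [hI, hJ, Set.diff_diff_comm]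

lemma syncMem_read_comm {i : TID} {I : Set TID} (hiI : i ∉ I)
    (X : MemEvs Addr TID) (g : Addr) :
    Function.update (syncMem I X) g
      (Function.update ((syncMem I X) g).1 i Set.univ, ((syncMem I X) g).2) =
    syncMem I (Function.update X g
      (Function.update (X g).1 i Set.univ, (X g).2)) := by
  funext g'
  by_cases hg : g' = g
  · subst hg
    have h1 : (Function.update X g' (Function.update (X g').1 i Set.univ, (X g').2)) g'
        = (Function.update (X g').1 i Set.univ, (X g').2) := Function.update_self _ _ _
    simp only [Function.update_self, syncMem]
    rw [h1]
    refine Prod.ext ?_ rfl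
    funext j
    by_cases hj : j = i
    · subst hj; simp [hiI]
    · by_cases hJ : j ∈ I <;> simp [hj, hJ]
  · have h1 : (Function.update X g (Function.update (X g).1 i Set.univ, (X g).2)) g'
        = X g' := Function.update_of_ne hg _ _
    rw [Function.update_of_ne hg]
    show syncMem I X g' = _
    simp only [syncMem]
    rw [h1]

lemma syncMem_write_comm {i : TID} {I : Set TID} (hiI : i ∉ I)
    (X : MemEvs Addr TID) (g : Addr) :
    Function.update (syncMem I X) g
      (((syncMem I X) g).1, (i, (Set.univ : Set TID))) =
    syncMem I (Function.update X g ((X g).1, (i, (Set.univ : Set TID)))) := by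
  funext g'
  by_cases hg : g' = g
  · subst hg
    have h1 : (Function.update X g' ((X g').1, (i, (Set.univ : Set TID)))) g'
        = ((X g').1, (i, (Set.univ : Set TID))) := Function.update_self _ _ _
    simp only [Function.update_self, syncMem]
    rw [h1]
    simp [hiI]
  · have h1 : (Function.update X g ((X g).1, (i, (Set.univ : Set TID)))) g'
        = X g' := Function.update_of_ne hg _ _
    rw [Function.update_of_ne hg]
    show syncMem I X g' = _
    simp only [syncMem]
    rw [h1]

/-- Generic commutation of two single-key updates at distinct keys, where the
payloads depend on the current value at the key. -/
lemma update_update_comm {α β : Type*} [DecidableEq α] (f : α → β) {a b : α}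
    (hab : a ≠ b) (F G : β → β) :
    Function.update (Function.update f a (F (f a))) b
      (G ((Function.update f a (F (f a))) b)) =
    Function.update (Function.update f b (G (f b))) a
      (F ((Function.update f b (G (f b))) a)) := by
  rw [Function.update_of_ne hab.symm, Function.update_of_ne hab]
  exact Function.update_comm hab _ _ _

/-- A `sync` step is impossible for a thread that can do a checked step. -/
lemma ctstep_shape {i : TID} {X : MemEvs Addr TID} {G : Addr → Val} {R : Reg → Val}
    {T : ThreadProg C Reg Addr TID} {z : CTRes Val C Reg Addr TID}
    (h : CTStep op κ i X G R T z) :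
    T ≠ .ret ∧ ∀ (I : Set TID) T', T ≠ .seq (.sync I) T' := by
  cases h <;> simp

/-- Determinism of the `Sync` rule for a given barrier set. -/
lemma sync_det {c : Config Val C Reg Addr TID} {I : Set TID}
    {P₁ P₂ : TID → ThreadProg C Reg Addr TID}
    (hout₁ : ∀ i ∉ I, P₁ i = c.P i)
    (hin₁ : ∀ i ∈ I, (c.P i = .ret ∧ P₁ i = .ret) ∨
      ∃ T, c.P i = .seq (.sync I) T ∧ P₁ i = T)
    (hout₂ : ∀ i ∉ I, P₂ i = c.P i)
    (hin₂ : ∀ i ∈ I, (c.P i = .ret ∧ P₂ i = .ret) ∨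
      ∃ T, c.P i = .seq (.sync I) T ∧ P₂ i = T) :
    P₁ = P₂ := by
  funext i
  by_cases hi : i ∈ I
  · rcases hin₁ i hi with ⟨h1, h2⟩ | ⟨T, h1, h2⟩ <;>
      rcases hin₂ i hi with ⟨h3, h4⟩ | ⟨T', h3, h4⟩ <;> rw [h1] at h3 <;> simp_all
  · rw [hout₁ i hi, hout₂ i hi]

end Aux3

end Volta

namespace Volta

section Aux4
set_option linter.unusedSectionVars false

variable {Val C Reg Addr TID : Type}
variable [DecidableEq Reg] [DecidableEq Addr] [DecidableEq TID]
variable {op : Val → Val → Val} {κ : C → Val}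

/-- Repackaged `Schd` rule. -/
lemma cstep_schd' {X X' : MemEvs Addr TID} {c : Config Val C Reg Addr TID} {j : TID}
    {Rj : Reg → Val} {Pj : ThreadProg C Reg Addr TID}
    {G' : Addr → Val} {R' : Reg → Val} {T' : ThreadProg C Reg Addr TID}
    (hR : c.R j = Rj) (hP : c.P j = Pj)
    (hct : CTStep op κ j X c.G Rj Pj (.ok X' G' R' T')) :
    CStep op κ (.ok X c)
      (.ok X' ⟨G', Function.update c.R j R', Function.update c.P j T'⟩) := by
  subst hR; subst hP; exact CStep.schd hct

/-- A checked thread step survives an unrelated barrier. -/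
lemma ctstep_syncMem {i : TID} {I : Set TID} (hiI : i ∉ I)
    {X X₁ : MemEvs Addr TID} {G G₁ : Addr → Val} {R R₁ : Reg → Val}
    {T T₁ : ThreadProg C Reg Addr TID}
    (hct : CTStep op κ i X G R T (.ok X₁ G₁ R₁ T₁)) :
    CTStep op κ i (syncMem I X) G R T (.ok (syncMem I X₁) G₁ R₁ T₁) := by
  cases hct with
  | const => exact .const
  | binop => exact .binop
  | copy => exact .copy
  | read hw =>
    rename_i r g
    have h := CTStep.read (op := op) (κ := κ) (i := i) (X := syncMem I X)
      (G := G) (R := R) (r := r) (g := g) (T := T₁) (noRacingWr_syncMem hw)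
    rwa [syncMem_read_comm hiI] at h
  | write hr hw =>
    rename_i g r
    have h := CTStep.write (op := op) (κ := κ) (i := i) (X := syncMem I X)
      (G := G) (R := R) (g := g) (r := r) (T := T₁) (noRacingRd_syncMem hr)
      (noRacingWr_syncMem hw)
    rwa [syncMem_write_comm hiI] at h

lemma diamond_schd_sync {i : TID} {X X₁ : MemEvs Addr TID}
    {c : Config Val C Reg Addr TID} {G₁ : Addr → Val} {R₁ : Reg → Val}
    {T₁ : ThreadProg C Reg Addr TID} {I : Set TID} {P' : TID → ThreadProg C Reg Addr TID}
    (hct : CTStep op κ i X c.G (c.R i) (c.P i) (.ok X₁ G₁ R₁ T₁))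
    (hout : ∀ j ∉ I, P' j = c.P j)
    (hin : ∀ j ∈ I, (c.P j = .ret ∧ P' j = .ret) ∨
      ∃ T, c.P j = .seq (.sync I) T ∧ P' j = T) :
    ∃ d, CStep op κ (.ok X₁ ⟨G₁, Function.update c.R i R₁, Function.update c.P i T₁⟩) d ∧
         CStep op κ (.ok (syncMem I X) ⟨c.G, c.R, P'⟩) d := by
  have hiI : i ∉ I := by
    intro hiI
    obtain ⟨hr, hs⟩ := ctstep_shape hct
    rcases hin i hiI with ⟨h1, _⟩ | ⟨T, h1, _⟩
    · exact hr h1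
    · exact hs I T h1
  refine ⟨.ok (syncMem I X₁) ⟨G₁, Function.update c.R i R₁, Function.update P' i T₁⟩,
    ?_, ?_⟩
  · have h := CStep.sync (op := op) (κ := κ) (X := X₁)
      (c := ⟨G₁, Function.update c.R i R₁, Function.update c.P i T₁⟩)
      (I := I) (P' := Function.update P' i T₁)
      (by
        intro j hj
        show Function.update P' i T₁ j = Function.update c.P i T₁ j
        by_cases hji : j = i
        · subst hji; simp
        · rw [Function.update_of_ne hji, Function.update_of_ne hji, hout j hj])
      (by
        intro j hj
        have hji : j ≠ i := fun h => hiI (h ▸ hj)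
        show (Function.update c.P i T₁ j = .ret ∧ Function.update P' i T₁ j = .ret) ∨
          ∃ T, Function.update c.P i T₁ j = .seq (.sync I) T ∧
            Function.update P' i T₁ j = T
        rw [Function.update_of_ne hji, Function.update_of_ne hji]
        exact hin j hj)
    exact h
  · exact cstep_schd' (c := ⟨c.G, c.R, P'⟩) rfl (hout i hiI) (ctstep_syncMem hiI hct)

lemma diamond_sync_sync {X : MemEvs Addr TID} {c : Config Val C Reg Addr TID}
    {I J : Set TID} {P₁ P₂ : TID → ThreadProg C Reg Addr TID} (hIJ : I ≠ J)
    (hout₁ : ∀ j ∉ I, P₁ j = c.P j)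
    (hin₁ : ∀ j ∈ I, (c.P j = .ret ∧ P₁ j = .ret) ∨
      ∃ T, c.P j = .seq (.sync I) T ∧ P₁ j = T)
    (hout₂ : ∀ j ∉ J, P₂ j = c.P j)
    (hin₂ : ∀ j ∈ J, (c.P j = .ret ∧ P₂ j = .ret) ∨
      ∃ T, c.P j = .seq (.sync J) T ∧ P₂ j = T) :
    ∃ d, CStep op κ (.ok (syncMem I X) ⟨c.G, c.R, P₁⟩) d ∧
         CStep op κ (.ok (syncMem J X) ⟨c.G, c.R, P₂⟩) d := by
  classical
  have hret : ∀ j, j ∈ I → j ∈ J → c.P j = .ret := by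
    intro j hI hJ
    rcases hin₁ j hI with ⟨h1, _⟩ | ⟨T, h1, _⟩
    · exact h1
    · exfalso
      rcases hin₂ j hJ with ⟨h2, _⟩ | ⟨T', h2, _⟩
      · rw [h1] at h2; simp at h2
      · rw [h1] at h2
        injection h2 with hs _
        injection hs with hIJ'
        exact hIJ hIJ'
  set P₃ : TID → ThreadProg C Reg Addr TID := fun j => if j ∈ J then P₂ j else P₁ j
    with hP₃
  refine ⟨.ok (syncMem J (syncMem I X)) ⟨c.G, c.R, P₃⟩, ?_, ?_⟩
  · exact CStep.sync (op := op) (κ := κ) (c := ⟨c.G, c.R, P₁⟩) (I := J) (P' := P₃)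
      (by
        intro j hj
        show P₃ j = P₁ j
        simp [hP₃, hj])
      (by
        intro j hj
        show (P₁ j = .ret ∧ P₃ j = .ret) ∨ ∃ T, P₁ j = .seq (.sync J) T ∧ P₃ j = T
        have hP₃j : P₃ j = P₂ j := by simp [hP₃, hj]
        rcases hin₂ j hj with ⟨h2a, h2b⟩ | ⟨T, h2a, h2b⟩
        · refine Or.inl ⟨?_, by rw [hP₃j, h2b]⟩
          by_cases hjI : j ∈ I
          · rcases hin₁ j hjI with ⟨_, h1b⟩ | ⟨T', h1a, _⟩
            · exact h1b
            · rw [h2a] at h1a; exact absurd h1a (by simp)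
          · rw [hout₁ j hjI, h2a]
        · have hjI : j ∉ I := by
            intro hjI
            rw [hret j hjI hj] at h2a
            exact absurd h2a (by simp)
          exact Or.inr ⟨T, by rw [hout₁ j hjI, h2a], by rw [hP₃j, h2b]⟩)
  · have h := CStep.sync (op := op) (κ := κ) (X := syncMem J X)
      (c := ⟨c.G, c.R, P₂⟩) (I := I) (P' := P₃)
      (by
        intro j hj
        show P₃ j = P₂ j
        by_cases hjJ : j ∈ J
        · simp [hP₃, hjJ]
        · rw [hP₃]; simp only [if_neg hjJ]
          rw [hout₁ j hj, hout₂ j hjJ]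
      )
      (by
        intro j hj
        show (P₂ j = .ret ∧ P₃ j = .ret) ∨ ∃ T, P₂ j = .seq (.sync I) T ∧ P₃ j = T
        rcases hin₁ j hj with ⟨h1a, h1b⟩ | ⟨T, h1a, h1b⟩
        · refine Or.inl ?_
          by_cases hjJ : j ∈ J
          · rcases hin₂ j hjJ with ⟨_, h2b⟩ | ⟨T', h2a, _⟩
            · exact ⟨h2b, by simp [hP₃, hjJ, h2b]⟩
            · rw [h1a] at h2a; exact absurd h2a (by simp)
          · exact ⟨by rw [hout₂ j hjJ, h1a], by simp [hP₃, hjJ, h1b]⟩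
        · have hjJ : j ∉ J := by
            intro hjJ
            rw [hret j hj hjJ] at h1a
            exact absurd h1a (by simp)
          exact Or.inr ⟨T, by rw [hout₂ j hjJ, h1a], by simp [hP₃, hjJ, h1b]⟩)
    rw [syncMem_comm] at h
    exact h

end Aux4

end Volta

namespace Volta

section Aux5
set_option linter.unusedSectionVars false

variable {Val C Reg Addr TID : Type}
variable [DecidableEq Reg] [DecidableEq Addr] [DecidableEq TID]
variable {op : Val → Val → Val} {κ : C → Val}

lemma cstep_target_eq {s : CConfig Val C Reg Addr TID} {X X' : MemEvs Addr TID}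
    {G G' : Addr → Val} {R R' : TID → Reg → Val} {P P' : TID → ThreadProg C Reg Addr TID}
    (h : CStep op κ s (.ok X ⟨G, R, P⟩)) (hX : X = X') (hG : G = G')
    (hR : R = R') (hP : P = P') : CStep op κ s (.ok X' ⟨G', R', P'⟩) := by
  subst hX; subst hG; subst hR; subst hP; exact h

lemma cstep_schd'' {X X' : MemEvs Addr TID} {G : Addr → Val} {R : TID → Reg → Val}
    {P : TID → ThreadProg C Reg Addr TID} {j : TID} {Rj : Reg → Val}
    {Pj : ThreadProg C Reg Addr TID} {G' : Addr → Val} {R' : Reg → Val}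
    {T' : ThreadProg C Reg Addr TID}
    (hR : R j = Rj) (hP : P j = Pj)
    (hct : CTStep op κ j X G Rj Pj (.ok X' G' R' T')) :
    CStep op κ (.ok X ⟨G, R, P⟩)
      (.ok X' ⟨G', Function.update R j R', Function.update P j T'⟩) := by
  subst hR; subst hP
  exact CStep.schd (c := ⟨G, R, P⟩) hct

lemma Xrr_comm {i j : TID} (hij : i ≠ j) (X : MemEvs Addr TID) (g : Addr) :
    Function.update
      (Function.update X g (Function.update (X g).1 i Set.univ, (X g).2)) g
      (Function.update
        ((Function.update X g (Function.update (X g).1 i Set.univ, (X g).2)) g).1 j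
          Set.univ,
       ((Function.update X g (Function.update (X g).1 i Set.univ, (X g).2)) g).2) =
    Function.update
      (Function.update X g (Function.update (X g).1 j Set.univ, (X g).2)) g
      (Function.update
        ((Function.update X g (Function.update (X g).1 j Set.univ, (X g).2)) g).1 i
          Set.univ,
       ((Function.update X g (Function.update (X g).1 j Set.univ, (X g).2)) g).2) := by
  simp only [Function.update_self, Function.update_idem]
  rw [Function.update_comm hij]

lemma diamond_schd_schd {i j : TID} {X X₁ X₂ : MemEvs Addr TID}
    {c : Config Val C Reg Addr TID} {G₁ G₂ : Addr → Val} {R₁ R₂ : Reg → Val}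
    {T₁ T₂ : ThreadProg C Reg Addr TID} (hij : i ≠ j)
    (h₁ : CTStep op κ i X c.G (c.R i) (c.P i) (.ok X₁ G₁ R₁ T₁))
    (h₂ : CTStep op κ j X c.G (c.R j) (c.P j) (.ok X₂ G₂ R₂ T₂)) :
    Stuck j X₁ ⟨G₁, Function.update c.R i R₁, Function.update c.P i T₁⟩ ∨
    ∃ d, CStep op κ (.ok X₁ ⟨G₁, Function.update c.R i R₁, Function.update c.P i T₁⟩) d ∧
         CStep op κ (.ok X₂ ⟨G₂, Function.update c.R j R₂, Function.update c.P j T₂⟩) d := by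
  have hRj : Function.update c.R i R₁ j = c.R j := Function.update_of_ne (Ne.symm hij) _ _
  have hRi : Function.update c.R j R₂ i = c.R i := Function.update_of_ne hij _ _
  have hPj : Function.update c.P i T₁ j = c.P j := Function.update_of_ne (Ne.symm hij) _ _
  have hPi : Function.update c.P j T₂ i = c.P i := Function.update_of_ne hij _ _
  generalize hpi : c.P i = Pi at h₁
  generalize hpj : c.P j = Pj at h₂
  cases h₁ with
  | const =>
    cases h₂ with
    | const =>
      refine Or.inr ⟨_, cstep_schd'' hRj (hPj.trans hpj) CTStep.const, ?_⟩
      exact cstep_target_eq (cstep_schd'' hRi (hPi.trans hpi) CTStep.const) rfl rfl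
        (Function.update_comm hij _ _ _).symm (Function.update_comm hij _ _ _).symm
    | binop =>
      refine Or.inr ⟨_, cstep_schd'' hRj (hPj.trans hpj) CTStep.binop, ?_⟩
      exact cstep_target_eq (cstep_schd'' hRi (hPi.trans hpi) CTStep.const) rfl rfl
        (Function.update_comm hij _ _ _).symm (Function.update_comm hij _ _ _).symm
    | copy =>
      refine Or.inr ⟨_, cstep_schd'' hRj (hPj.trans hpj) CTStep.copy, ?_⟩
      exact cstep_target_eq (cstep_schd'' hRi (hPi.trans hpi) CTStep.const) rfl rfl
        (Function.update_comm hij _ _ _).symm (Function.update_comm hij _ _ _).symm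
    | read hw₂ =>
      refine Or.inr ⟨_, cstep_schd'' hRj (hPj.trans hpj) (CTStep.read hw₂), ?_⟩
      exact cstep_target_eq (cstep_schd'' hRi (hPi.trans hpi) CTStep.const) rfl rfl
        (Function.update_comm hij _ _ _).symm (Function.update_comm hij _ _ _).symm
    | write hr₂ hw₂ =>
      refine Or.inr ⟨_, cstep_schd'' hRj (hPj.trans hpj) (CTStep.write hr₂ hw₂), ?_⟩
      exact cstep_target_eq (cstep_schd'' hRi (hPi.trans hpi) CTStep.const) rfl rfl
        (Function.update_comm hij _ _ _).symm (Function.update_comm hij _ _ _).symm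
  | binop =>
    cases h₂ with
    | const =>
      refine Or.inr ⟨_, cstep_schd'' hRj (hPj.trans hpj) CTStep.const, ?_⟩
      exact cstep_target_eq (cstep_schd'' hRi (hPi.trans hpi) CTStep.binop) rfl rfl
        (Function.update_comm hij _ _ _).symm (Function.update_comm hij _ _ _).symm
    | binop =>
      refine Or.inr ⟨_, cstep_schd'' hRj (hPj.trans hpj) CTStep.binop, ?_⟩
      exact cstep_target_eq (cstep_schd'' hRi (hPi.trans hpi) CTStep.binop) rfl rfl
        (Function.update_comm hij _ _ _).symm (Function.update_comm hij _ _ _).symm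
    | copy =>
      refine Or.inr ⟨_, cstep_schd'' hRj (hPj.trans hpj) CTStep.copy, ?_⟩
      exact cstep_target_eq (cstep_schd'' hRi (hPi.trans hpi) CTStep.binop) rfl rfl
        (Function.update_comm hij _ _ _).symm (Function.update_comm hij _ _ _).symm
    | read hw₂ =>
      refine Or.inr ⟨_, cstep_schd'' hRj (hPj.trans hpj) (CTStep.read hw₂), ?_⟩
      exact cstep_target_eq (cstep_schd'' hRi (hPi.trans hpi) CTStep.binop) rfl rfl
        (Function.update_comm hij _ _ _).symm (Function.update_comm hij _ _ _).symm
    | write hr₂ hw₂ =>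
      refine Or.inr ⟨_, cstep_schd'' hRj (hPj.trans hpj) (CTStep.write hr₂ hw₂), ?_⟩
      exact cstep_target_eq (cstep_schd'' hRi (hPi.trans hpi) CTStep.binop) rfl rfl
        (Function.update_comm hij _ _ _).symm (Function.update_comm hij _ _ _).symm
  | copy =>
    cases h₂ with
    | const =>
      refine Or.inr ⟨_, cstep_schd'' hRj (hPj.trans hpj) CTStep.const, ?_⟩
      exact cstep_target_eq (cstep_schd'' hRi (hPi.trans hpi) CTStep.copy) rfl rfl
        (Function.update_comm hij _ _ _).symm (Function.update_comm hij _ _ _).symm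
    | binop =>
      refine Or.inr ⟨_, cstep_schd'' hRj (hPj.trans hpj) CTStep.binop, ?_⟩
      exact cstep_target_eq (cstep_schd'' hRi (hPi.trans hpi) CTStep.copy) rfl rfl
        (Function.update_comm hij _ _ _).symm (Function.update_comm hij _ _ _).symm
    | copy =>
      refine Or.inr ⟨_, cstep_schd'' hRj (hPj.trans hpj) CTStep.copy, ?_⟩
      exact cstep_target_eq (cstep_schd'' hRi (hPi.trans hpi) CTStep.copy) rfl rfl
        (Function.update_comm hij _ _ _).symm (Function.update_comm hij _ _ _).symm
    | read hw₂ =>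
      refine Or.inr ⟨_, cstep_schd'' hRj (hPj.trans hpj) (CTStep.read hw₂), ?_⟩
      exact cstep_target_eq (cstep_schd'' hRi (hPi.trans hpi) CTStep.copy) rfl rfl
        (Function.update_comm hij _ _ _).symm (Function.update_comm hij _ _ _).symm
    | write hr₂ hw₂ =>
      refine Or.inr ⟨_, cstep_schd'' hRj (hPj.trans hpj) (CTStep.write hr₂ hw₂), ?_⟩
      exact cstep_target_eq (cstep_schd'' hRi (hPi.trans hpi) CTStep.copy) rfl rfl
        (Function.update_comm hij _ _ _).symm (Function.update_comm hij _ _ _).symm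
  | read hw₁ =>
    rename_i r₁ g₁
    cases h₂ with
    | const =>
      refine Or.inr ⟨_, cstep_schd'' hRj (hPj.trans hpj) CTStep.const, ?_⟩
      exact cstep_target_eq (cstep_schd'' hRi (hPi.trans hpi) (CTStep.read hw₁)) rfl rfl
        (Function.update_comm hij _ _ _).symm (Function.update_comm hij _ _ _).symm
    | binop =>
      refine Or.inr ⟨_, cstep_schd'' hRj (hPj.trans hpj) CTStep.binop, ?_⟩
      exact cstep_target_eq (cstep_schd'' hRi (hPi.trans hpi) (CTStep.read hw₁)) rfl rfl
        (Function.update_comm hij _ _ _).symm (Function.update_comm hij _ _ _).symm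
    | copy =>
      refine Or.inr ⟨_, cstep_schd'' hRj (hPj.trans hpj) CTStep.copy, ?_⟩
      exact cstep_target_eq (cstep_schd'' hRi (hPi.trans hpi) (CTStep.read hw₁)) rfl rfl
        (Function.update_comm hij _ _ _).symm (Function.update_comm hij _ _ _).symm
    | read hw₂ =>
      rename_i r₂ g₂
      by_cases hg : g₂ = g₁
      · subst hg
        have hw₂' : noRacingWr j
            ((Function.update X g₂
              (Function.update (X g₂).1 i Set.univ, (X g₂).2)) g₂).2 := by
          simp only [Function.update_self]; exact hw₂
        have hw₁' : noRacingWr i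
            ((Function.update X g₂
              (Function.update (X g₂).1 j Set.univ, (X g₂).2)) g₂).2 := by
          simp only [Function.update_self]; exact hw₁
        refine Or.inr ⟨_, cstep_schd'' hRj (hPj.trans hpj) (CTStep.read hw₂'), ?_⟩
        refine cstep_target_eq (cstep_schd'' hRi (hPi.trans hpi) (CTStep.read hw₁'))
          (Xrr_comm hij X g₂).symm ?_ (Function.update_comm hij _ _ _).symm
          (Function.update_comm hij _ _ _).symm
        · simp only [Function.update_self]
      · have hg' : ¬ g₁ = g₂ := fun h => hg h.symm
        have hw₂' : noRacingWr j
            ((Function.update X g₁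
              (Function.update (X g₁).1 i Set.univ, (X g₁).2)) g₂).2 := by
          rw [Function.update_of_ne hg]; exact hw₂
        have hw₁' : noRacingWr i
            ((Function.update X g₂
              (Function.update (X g₂).1 j Set.univ, (X g₂).2)) g₁).2 := by
          rw [Function.update_of_ne hg']; exact hw₁
        refine Or.inr ⟨_, cstep_schd'' hRj (hPj.trans hpj) (CTStep.read hw₂'), ?_⟩
        refine cstep_target_eq (cstep_schd'' hRi (hPi.trans hpi) (CTStep.read hw₁'))
          ?_ rfl (Function.update_comm hij _ _ _).symm
          (Function.update_comm hij _ _ _).symm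
        exact (update_update_comm X hg'
          (fun p => (Function.update p.1 i Set.univ, p.2))
          (fun p => (Function.update p.1 j Set.univ, p.2))).symm
    | write hr₂ hw₂ =>
      rename_i g₂ r₂
      by_cases hg : g₂ = g₁
      · subst hg
        refine Or.inl (Or.inr ⟨g₂, r₂, T₂, hPj.trans hpj, Or.inl ⟨i, Ne.symm hij, ?_⟩⟩)
        simp only [Function.update_self]
        simp
      · have hg' : ¬ g₁ = g₂ := fun h => hg h.symm
        have e₂ : (Function.update X g₁
            (Function.update (X g₁).1 i Set.univ, (X g₁).2)) g₂ = X g₂ :=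
          Function.update_of_ne hg _ _
        have e₁ : (Function.update X g₂ ((X g₂).1, (j, Set.univ))) g₁ = X g₁ :=
          Function.update_of_ne hg' _ _
        have hr₂' : noRacingRd j ((Function.update X g₁
            (Function.update (X g₁).1 i Set.univ, (X g₁).2)) g₂).1 := by
          rw [e₂]; exact hr₂
        have hw₂' : noRacingWr j ((Function.update X g₁
            (Function.update (X g₁).1 i Set.univ, (X g₁).2)) g₂).2 := by
          rw [e₂]; exact hw₂
        have hw₁' : noRacingWr i
            ((Function.update X g₂ ((X g₂).1, (j, Set.univ))) g₁).2 := by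
          rw [e₁]; exact hw₁
        refine Or.inr ⟨_, cstep_schd'' hRj (hPj.trans hpj) (CTStep.write hr₂' hw₂'), ?_⟩
        refine cstep_target_eq (cstep_schd'' hRi (hPi.trans hpi) (CTStep.read hw₁'))
          ?_ rfl ?_ (Function.update_comm hij _ _ _).symm
        · exact (update_update_comm X hg'
            (fun p => (Function.update p.1 i Set.univ, p.2))
            (fun p => (p.1, (j, Set.univ)))).symm
        · have eG : (Function.update c.G g₂ (c.R j r₂)) g₁ = c.G g₁ :=
            Function.update_of_ne hg' _ _
          rw [eG, Function.update_eq_self, ← hRj, Function.update_eq_self]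
  | write hr₁ hw₁ =>
    rename_i g₁ r₁
    cases h₂ with
    | const =>
      refine Or.inr ⟨_, cstep_schd'' hRj (hPj.trans hpj) CTStep.const, ?_⟩
      exact cstep_target_eq (cstep_schd'' hRi (hPi.trans hpi) (CTStep.write hr₁ hw₁))
        rfl rfl (Function.update_comm hij _ _ _).symm (Function.update_comm hij _ _ _).symm
    | binop =>
      refine Or.inr ⟨_, cstep_schd'' hRj (hPj.trans hpj) CTStep.binop, ?_⟩
      exact cstep_target_eq (cstep_schd'' hRi (hPi.trans hpi) (CTStep.write hr₁ hw₁))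
        rfl rfl (Function.update_comm hij _ _ _).symm (Function.update_comm hij _ _ _).symm
    | copy =>
      refine Or.inr ⟨_, cstep_schd'' hRj (hPj.trans hpj) CTStep.copy, ?_⟩
      exact cstep_target_eq (cstep_schd'' hRi (hPi.trans hpi) (CTStep.write hr₁ hw₁))
        rfl rfl (Function.update_comm hij _ _ _).symm (Function.update_comm hij _ _ _).symm
    | read hw₂ =>
      rename_i r₂ g₂
      by_cases hg : g₂ = g₁
      · subst hg
        refine Or.inl (Or.inl ⟨r₂, g₂, T₂, hPj.trans hpj, ?_⟩)
        show j ≠ ((Function.update X g₂ ((X g₂).1, (i, Set.univ))) g₂).2.1 ∧ _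
        simp only [Function.update_self]
        exact ⟨Ne.symm hij, Set.mem_univ j⟩
      · have hg' : ¬ g₁ = g₂ := fun h => hg h.symm
        have e₂ : (Function.update X g₁ ((X g₁).1, (i, Set.univ))) g₂ = X g₂ :=
          Function.update_of_ne hg _ _
        have e₁ : (Function.update X g₂
            (Function.update (X g₂).1 j Set.univ, (X g₂).2)) g₁ = X g₁ :=
          Function.update_of_ne hg' _ _
        have hw₂' : noRacingWr j
            ((Function.update X g₁ ((X g₁).1, (i, Set.univ))) g₂).2 := by
          rw [e₂]; exact hw₂
        have hr₁' : noRacingRd i ((Function.update X g₂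
            (Function.update (X g₂).1 j Set.univ, (X g₂).2)) g₁).1 := by
          rw [e₁]; exact hr₁
        have hw₁' : noRacingWr i ((Function.update X g₂
            (Function.update (X g₂).1 j Set.univ, (X g₂).2)) g₁).2 := by
          rw [e₁]; exact hw₁
        refine Or.inr ⟨_, cstep_schd'' hRj (hPj.trans hpj) (CTStep.read hw₂'), ?_⟩
        refine cstep_target_eq (cstep_schd'' hRi (hPi.trans hpi) (CTStep.write hr₁' hw₁'))
          ?_ rfl ?_ (Function.update_comm hij _ _ _).symm
        · exact (update_update_comm X hg'
            (fun p => (p.1, (i, Set.univ)))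
            (fun p => (Function.update p.1 j Set.univ, p.2))).symm
        · have eG : (Function.update c.G g₁ (c.R i r₁)) g₂ = c.G g₂ :=
            Function.update_of_ne hg _ _
          rw [Function.update_comm (Ne.symm hij), eG]
    | write hr₂ hw₂ =>
      rename_i g₂ r₂
      by_cases hg : g₂ = g₁
      · subst hg
        refine Or.inl (Or.inr ⟨g₂, r₂, T₂, hPj.trans hpj, Or.inr ?_⟩)
        show j ≠ ((Function.update X g₂ ((X g₂).1, (i, Set.univ))) g₂).2.1 ∧ _
        simp only [Function.update_self]
        exact ⟨Ne.symm hij, Set.mem_univ j⟩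
      · have hg' : ¬ g₁ = g₂ := fun h => hg h.symm
        have e₂ : (Function.update X g₁ ((X g₁).1, (i, Set.univ))) g₂ = X g₂ :=
          Function.update_of_ne hg _ _
        have e₁ : (Function.update X g₂ ((X g₂).1, (j, Set.univ))) g₁ = X g₁ :=
          Function.update_of_ne hg' _ _
        have hr₂' : noRacingRd j
            ((Function.update X g₁ ((X g₁).1, (i, Set.univ))) g₂).1 := by
          rw [e₂]; exact hr₂
        have hw₂' : noRacingWr j
            ((Function.update X g₁ ((X g₁).1, (i, Set.univ))) g₂).2 := by
          rw [e₂]; exact hw₂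
        have hr₁' : noRacingRd i
            ((Function.update X g₂ ((X g₂).1, (j, Set.univ))) g₁).1 := by
          rw [e₁]; exact hr₁
        have hw₁' : noRacingWr i
            ((Function.update X g₂ ((X g₂).1, (j, Set.univ))) g₁).2 := by
          rw [e₁]; exact hw₁
        refine Or.inr ⟨_, cstep_schd'' hRj (hPj.trans hpj) (CTStep.write hr₂' hw₂'), ?_⟩
        refine cstep_target_eq (cstep_schd'' hRi (hPi.trans hpi) (CTStep.write hr₁' hw₁'))
          ?_ (Function.update_comm hg' _ _ _).symm ?_
          (Function.update_comm hij _ _ _).symm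
        · exact (update_update_comm X hg'
            (fun p => (p.1, (i, Set.univ)))
            (fun p => (p.1, (j, Set.univ)))).symm
        · simp only [Function.update_eq_self]

end Aux5

end Volta

namespace Volta

section Aux6
set_option linter.unusedSectionVars false

variable {Val C Reg Addr TID : Type}
variable [DecidableEq Reg] [DecidableEq Addr] [DecidableEq TID]
variable {op : Val → Val → Val} {κ : C → Val}

lemma terminal_run {X' : MemEvs Addr TID}
    {Gt : Addr → Val} {Rt : TID → Reg → Val} {Pt : TID → ThreadProg C Reg Addr TID} :
    ∀ (n : ℕ) (X : MemEvs Addr TID) (c : Config Val C Reg Addr TID),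
    CStepsN op κ n (.ok X c) (.ok X' ⟨Gt, Rt, Pt⟩) →
    (∀ i, c.P i = .ret) → c.G = Gt ∧ c.R = Rt := by
  intro n
  induction n with
  | zero =>
    intro X c hρ _
    cases hρ with | refl => exact ⟨rfl, rfl⟩
  | succ n ih =>
    intro X c hρ hc
    cases hρ with
    | head hstep htail =>
      rename_i b
      cases b with
      | err => exact absurd (cstepsN_err htail) (by simp)
      | ok Xa ca =>
        cases hstep with
        | schd hct => exact absurd (hc _) (ctstep_shape hct).1
        | sync hout hin =>
          rename_i I P'
          have hP' : ∀ i, (⟨c.G, c.R, P'⟩ : Config Val C Reg Addr TID).P i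
              = ThreadProg.ret := by
            intro k
            by_cases hk : k ∈ I
            · rcases hin k hk with ⟨_, h2⟩ | ⟨T, h1, _⟩
              · exact h2
              · exact absurd ((hc k).symm.trans h1) (by simp)
            · exact (hout k hk).trans (hc k)
          exact ih _ (⟨c.G, c.R, P'⟩ : Config Val C Reg Addr TID) htail hP'

lemma main_lemma (n : ℕ) :
    ∀ (X : MemEvs Addr TID) (c : Config Val C Reg Addr TID) (X' : MemEvs Addr TID)
      (Gt : Addr → Val) (Rt : TID → Reg → Val) (Pt : TID → ThreadProg C Reg Addr TID),
      CStepsN op κ n (.ok X c) (.ok X' ⟨Gt, Rt, Pt⟩) → (∀ i, Pt i = .ret) →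
      ∀ z, CStep op κ (.ok X c) z →
    ∃ (Y : MemEvs Addr TID) (d : Config Val C Reg Addr TID) (m : ℕ),
      z = .ok Y d ∧ m ≤ n ∧
      ∃ (X'' : MemEvs Addr TID) (P₂ : TID → ThreadProg C Reg Addr TID),
        CStepsN op κ m (.ok Y d) (.ok X'' ⟨Gt, Rt, P₂⟩) ∧ (∀ i, P₂ i = .ret) := by
  induction n using Nat.strong_induction_on with
  | _ n ih =>
  intro X c X' Gt Rt Pt hρ hret z hz
  cases z with
  | err =>
    exfalso
    obtain ⟨k, hstk⟩ := err_stuck hz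
    exact stuck_not_ret (stuck_stepsN hρ hstk) (hret k)
  | ok Y d =>
  cases hρ with
  | refl =>
    cases hz with
    | schd hct =>
      exact absurd (hret _) (ctstep_shape hct).1
    | sync hout hin =>
      rename_i I P'
      refine ⟨_, _, 0, rfl, Nat.zero_le _, _, P', CStepsN.refl _, ?_⟩
      intro k
      by_cases hk : k ∈ I
      · rcases hin k hk with ⟨_, h2⟩ | ⟨T, h1, _⟩
        · exact h2
        · exact absurd ((hret k).symm.trans h1) (by simp)
      · exact (hout k hk).trans (hret k)
  | head hα htail =>
    rename_i n' b
    cases b with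
    | err => exact absurd (cstepsN_err htail) (by simp)
    | ok Xa ca =>
      cases hα with
      | schd hct₁ =>
        rename_i i G₁ R₁ T₁
        cases hz with
        | schd hct₂ =>
          rename_i i' G₂ R₂ T₂
          by_cases hii' : i = i'
          · subst hii'
            have hdet := ctstep_det hct₁ hct₂
            injection hdet with eX eG eR eT
            subst eX; subst eG; subst eR; subst eT
            exact ⟨_, _, n', rfl, Nat.le_succ n', X', Pt, htail, hret⟩
          · rcases diamond_schd_schd hii' hct₁ hct₂ with hstk | ⟨d', s1, s2⟩
            · exact absurd (hret i')
                (stuck_not_ret (stuck_stepsN htail hstk))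
            · obtain ⟨Y₂, d₂, m₂, hd', hm₂, X₂'', P₂, hrun, hP₂⟩ :=
                ih n' (Nat.lt_succ_self n') _ _ _ _ _ _ htail hret d' s1
              subst hd'
              exact ⟨_, _, m₂ + 1, rfl, Nat.succ_le_succ hm₂, X₂'', P₂,
                .head s2 hrun, hP₂⟩
        | sync hout hin =>
          rename_i I P'
          rcases diamond_schd_sync hct₁ hout hin with ⟨d', s1, s2⟩
          obtain ⟨Y₂, d₂, m₂, hd', hm₂, X₂'', P₂, hrun, hP₂⟩ :=
            ih n' (Nat.lt_succ_self n') _ _ _ _ _ _ htail hret d' s1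
          subst hd'
          exact ⟨_, _, m₂ + 1, rfl, Nat.succ_le_succ hm₂, X₂'', P₂,
            .head s2 hrun, hP₂⟩
      | sync hout₁ hin₁ =>
        rename_i I P₁'
        cases hz with
        | schd hct₂ =>
          rename_i i G₂ R₂ T₂
          rcases diamond_schd_sync hct₂ hout₁ hin₁ with ⟨d', s_schd, s_sync⟩
          obtain ⟨Y₂, d₂, m₂, hd', hm₂, X₂'', P₂, hrun, hP₂⟩ :=
            ih n' (Nat.lt_succ_self n') _ _ _ _ _ _ htail hret d' s_sync
          subst hd'
          exact ⟨_, _, m₂ + 1, rfl, Nat.succ_le_succ hm₂, X₂'', P₂,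
            .head s_schd hrun, hP₂⟩
        | sync hout₂ hin₂ =>
          rename_i J P₂'
          by_cases hIJ : I = J
          · subst hIJ
            have hP := sync_det hout₁ hin₁ hout₂ hin₂
            subst hP
            exact ⟨_, _, n', rfl, Nat.le_succ n', X', Pt, htail, hret⟩
          · rcases diamond_sync_sync hIJ hout₁ hin₁ hout₂ hin₂ with ⟨d', s1, s2⟩
            obtain ⟨Y₂, d₂, m₂, hd', hm₂, X₂'', P₂, hrun, hP₂⟩ :=
              ih n' (Nat.lt_succ_self n') _ _ _ _ _ _ htail hret d' s1
            subst hd'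
            exact ⟨_, _, m₂ + 1, rfl, Nat.succ_le_succ hm₂, X₂'', P₂,
              .head s2 hrun, hP₂⟩

lemma global_lemma (m : ℕ) :
    ∀ (n : ℕ) (X : MemEvs Addr TID) (c : Config Val C Reg Addr TID)
      (X' : MemEvs Addr TID) (Gt : Addr → Val) (Rt : TID → Reg → Val)
      (Pt : TID → ThreadProg C Reg Addr TID),
      CStepsN op κ n (.ok X c) (.ok X' ⟨Gt, Rt, Pt⟩) → (∀ i, Pt i = .ret) →
      ∀ z, CStepsN op κ m (.ok X c) z →
    ∃ (Y : MemEvs Addr TID) (G₂ : Addr → Val) (R₂ : TID → Reg → Val)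
      (P₂ : TID → ThreadProg C Reg Addr TID),
      z = .ok Y ⟨G₂, R₂, P₂⟩ ∧ ((∀ i, P₂ i = .ret) → G₂ = Gt ∧ R₂ = Rt) := by
  induction m with
  | zero =>
    intro n X c X' Gt Rt Pt hρ hret z hτ
    cases hτ with
    | refl =>
      exact ⟨X, c.G, c.R, c.P, rfl, fun hc => terminal_run _ _ _ hρ hc⟩
  | succ m ihm =>
    intro n X c X' Gt Rt Pt hρ hret z hτ
    cases hτ with
    | head hs htail =>
      obtain ⟨Y, d, m', hzeq, _, X'', P₂, hrun, hP₂⟩ :=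
        main_lemma n _ _ _ _ _ _ hρ hret _ hs
      subst hzeq
      exact ihm m' _ _ _ _ _ _ hrun hP₂ z htail

end Aux6

end Volta

namespace Volta

section Aux7
set_option linter.unusedSectionVars false

variable {Val Val₂ C Reg Addr TID : Type}
variable [DecidableEq Reg] [DecidableEq Addr] [DecidableEq TID]
variable {op : Val → Val → Val} {κ : C → Val}
variable {op₂ : Val₂ → Val₂ → Val₂} {κ₂ : C → Val₂}

lemma comp_update {α β γ : Type*} [DecidableEq α] (φ : β → γ) (f : α → β) (a : α)
    (v : β) :
    (fun x => φ (Function.update f a v x)) = Function.update (fun x => φ (f x)) a (φ v) := by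
  funext x
  exact Function.apply_update (fun _ y => φ y) f a v x

lemma comp_update_fam {α β γ δ : Type*} [DecidableEq α] (φ : γ → δ) (f : α → β → γ)
    (a : α) (v : β → γ) :
    (fun k r => φ (Function.update f a v k r)) =
      Function.update (fun k r => φ (f k r)) a (fun r => φ (v r)) := by
  funext k r
  by_cases hk : k = a
  · subst hk; simp
  · rw [Function.update_of_ne hk, Function.update_of_ne hk]

/-- The image of a configuration under a map of values. -/
def cmap (φ : Val → Val₂) (c : Config Val C Reg Addr TID) : Config Val₂ C Reg Addr TID :=
  ⟨fun g => φ (c.G g), fun i r => φ (c.R i r), c.P⟩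

lemma ctstep_target_eq' {i : TID} {X X'' : MemEvs Addr TID} {G G'' : Addr → Val₂}
    {R R'' : Reg → Val₂} {T T' : ThreadProg C Reg Addr TID} {X' : MemEvs Addr TID}
    {G' : Addr → Val₂} {R' : Reg → Val₂}
    (h : CTStep op₂ κ₂ i X G R T (.ok X' G' R' T'))
    (hX : X' = X'') (hG : G' = G'') (hR : R' = R'') :
    CTStep op₂ κ₂ i X G R T (.ok X'' G'' R'' T') := by
  subst hX; subst hG; subst hR; exact h

lemma ctstep_map (φ : Val → Val₂)
    (hop : ∀ a b, φ (op a b) = op₂ (φ a) (φ b)) (hκ : ∀ cc, φ (κ cc) = κ₂ cc)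
    {i : TID} {X X' : MemEvs Addr TID} {G G' : Addr → Val} {R R' : Reg → Val}
    {T T' : ThreadProg C Reg Addr TID}
    (h : CTStep op κ i X G R T (.ok X' G' R' T')) :
    CTStep op₂ κ₂ i X (fun g => φ (G g)) (fun r => φ (R r)) T
      (.ok X' (fun g => φ (G' g)) (fun r => φ (R' r)) T') := by
  cases h with
  | const =>
    rename_i r cc
    refine ctstep_target_eq' (CTStep.const (op := op₂) (κ := κ₂)) rfl rfl ?_
    rw [comp_update φ R r (κ cc), hκ]
  | binop =>
    rename_i r r₁ r₂
    refine ctstep_target_eq' (CTStep.binop (op := op₂) (κ := κ₂)) rfl rfl ?_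
    rw [comp_update φ R r (op (R r₁) (R r₂)), hop]
  | copy =>
    rename_i r r'
    refine ctstep_target_eq' (CTStep.copy (op := op₂) (κ := κ₂)) rfl rfl ?_
    rw [comp_update φ R r (R r')]
  | read hw =>
    rename_i r g
    refine ctstep_target_eq' (CTStep.read (op := op₂) (κ := κ₂)
      (G := fun g => φ (G g)) (R := fun r => φ (R r)) hw) rfl rfl ?_
    rw [comp_update φ R r (G g)]
  | write hr hw =>
    rename_i g r
    refine ctstep_target_eq' (CTStep.write (op := op₂) (κ := κ₂)
      (G := fun g => φ (G g)) (R := fun r => φ (R r)) hr hw) rfl ?_ rfl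
    rw [comp_update φ G g (R r)]

lemma cstep_map (φ : Val → Val₂)
    (hop : ∀ a b, φ (op a b) = op₂ (φ a) (φ b)) (hκ : ∀ cc, φ (κ cc) = κ₂ cc)
    {X X' : MemEvs Addr TID} {c c' : Config Val C Reg Addr TID}
    (h : CStep op κ (.ok X c) (.ok X' c')) :
    CStep op₂ κ₂ (.ok X (cmap φ c)) (.ok X' (cmap φ c')) := by
  cases h with
  | schd hct =>
    rename_i i G' R' T'
    have hct' := ctstep_map φ hop hκ hct
    have h2 := CStep.schd (op := op₂) (κ := κ₂) (c := cmap φ c) (i := i) hct'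
    refine cstep_target_eq h2 rfl rfl ?_ rfl
    exact (comp_update_fam φ c.R i R').symm
  | sync hout hin =>
    exact CStep.sync (op := op₂) (κ := κ₂) (c := cmap φ c) hout hin

lemma cstepsN_map (φ : Val → Val₂)
    (hop : ∀ a b, φ (op a b) = op₂ (φ a) (φ b)) (hκ : ∀ cc, φ (κ cc) = κ₂ cc) :
    ∀ (n : ℕ) (X X' : MemEvs Addr TID) (c c' : Config Val C Reg Addr TID),
    CStepsN op κ n (.ok X c) (.ok X' c') →
    CStepsN op₂ κ₂ n (.ok X (cmap φ c)) (.ok X' (cmap φ c')) := by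
  intro n
  induction n with
  | zero =>
    intro X X' c c' h
    cases h with | refl => exact .refl _
  | succ n ih =>
    intro X X' c c' h
    cases h with
    | head hs htail =>
      rename_i b
      cases b with
      | err => exact absurd (cstepsN_err htail) (by simp)
      | ok X₁ c₁ => exact .head (cstep_map φ hop hκ hs) (ih _ _ _ _ htail)

/-- Any unchecked step lifts to a checked step (possibly to the error). -/
lemma lift_step {c c' : Config Val₂ C Reg Addr TID}
    (h : Step op₂ κ₂ c c') (X : MemEvs Addr TID) :
    (∃ X', CStep op₂ κ₂ (.ok X c) (.ok X' c')) ∨ CStep op₂ κ₂ (.ok X c) .err := by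
  classical
  cases h with
  | schd hts =>
    rename_i i G' R' T'
    generalize hp : c.P i = Pi at hts
    cases hts with
    | const => exact Or.inl ⟨X, cstep_schd'' rfl hp CTStep.const⟩
    | binop => exact Or.inl ⟨X, cstep_schd'' rfl hp CTStep.binop⟩
    | copy => exact Or.inl ⟨X, cstep_schd'' rfl hp CTStep.copy⟩
    | read =>
      rename_i r g
      by_cases hw : noRacingWr i (X g).2
      · exact Or.inl ⟨_, cstep_schd'' rfl hp (CTStep.read hw)⟩
      · refine Or.inr (CStep.schdBad (i := i) ?_)
        rw [hp]
        exact CTStep.readBad hw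
    | write =>
      rename_i g r
      by_cases hrd : noRacingRd i (X g).1
      · by_cases hwr : noRacingWr i (X g).2
        · exact Or.inl ⟨_, cstep_schd'' rfl hp (CTStep.write hrd hwr)⟩
        · refine Or.inr (CStep.schdBad (i := i) ?_)
          rw [hp]
          exact CTStep.writeBad (Or.inr hwr)
      · refine Or.inr (CStep.schdBad (i := i) ?_)
        rw [hp]
        exact CTStep.writeBad (Or.inl hrd)
  | sync hout hin =>
    exact Or.inl ⟨_, CStep.sync hout hin⟩

lemma cstepsN_snoc {n : ℕ} {a b c : CConfig Val₂ C Reg Addr TID}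
    (h : CStepsN op₂ κ₂ n a b) (hs : CStep op₂ κ₂ b c) :
    CStepsN op₂ κ₂ (n + 1) a c := by
  induction h with
  | refl => exact .head hs (.refl _)
  | head h1 _ ih => exact .head h1 (ih hs)

/-- Lift an unchecked run to a checked run, given global error-freedom. -/
lemma lift_run {s₀ : CConfig Val₂ C Reg Addr TID}
    (hsafe : ∀ m, ¬ CStepsN op₂ κ₂ m s₀ .err) :
    ∀ (c c' : Config Val₂ C Reg Addr TID), Steps op₂ κ₂ c c' →
    ∀ (X : MemEvs Addr TID) (m : ℕ), CStepsN op₂ κ₂ m s₀ (.ok X c) →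
    ∃ (X' : MemEvs Addr TID) (m' : ℕ), CStepsN op₂ κ₂ m' s₀ (.ok X' c') := by
  intro c c' h
  induction h using Relation.ReflTransGen.head_induction_on with
  | refl => intro X m hm; exact ⟨X, m, hm⟩
  | head hs _ ih =>
    intro X m hm
    rcases lift_step hs X with ⟨X₁, hstep⟩ | hbad
    · exact ih X₁ (m + 1) (cstepsN_snoc hm hstep)
    · exact absurd (cstepsN_snoc hm hbad) (hsafe (m + 1))

end Aux7

end Volta

namespace Volta

/-- **Soundness of Equivalence Checking**: for all programs `P, Q`, symbolic
contexts `G, R` over `𝕍`, and maps `φ : (𝕍, ⊕) → (ℝ, ⊕)`, if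
`(X_∅, G, R, P) ↪↓ (G_P, R_P)`, `(X_∅, G, R, Q) ↪↓ (G_Q, R_Q)`, the symbolic
outputs are equal, `(φ(G), φ(R), P) ↓ (G_P', R_P')`, and
`(φ(G), φ(R), Q) ↓ (G_Q', R_Q')`, then `G_P' = G_Q'` and `R_P' = R_Q'`. -/
theorem soundness_of_equivalence_checking
    {V C Reg Addr TID : Type} [DecidableEq Reg] [DecidableEq Addr] [DecidableEq TID]
    (opV : V → V → V) (κV : C → V) (opR : ℝ → ℝ → ℝ) (κR : C → ℝ)
    (t₀ : TID)
    (G : Addr → V) (R : TID → Reg → V)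
    (P Q : TID → ThreadProg C Reg Addr TID)
    (φ : V → ℝ)
    (hop : ∀ v₁ v₂ : V, φ (opV v₁ v₂) = opR (φ v₁) (φ v₂))
    (hκ : ∀ c : C, φ (κV c) = κR c)
    (G_P G_Q : Addr → V) (R_P R_Q : TID → Reg → V)
    (G_P' G_Q' : Addr → ℝ) (R_P' R_Q' : TID → Reg → ℝ)
    (hP : CTerminates opV κV (emptyMemEvs t₀) ⟨G, R, P⟩ G_P R_P)
    (hQ : CTerminates opV κV (emptyMemEvs t₀) ⟨G, R, Q⟩ G_Q R_Q)
    (heqG : G_P = G_Q) (heqR : R_P = R_Q)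
    (hP' : Terminates opR κR ⟨fun g => φ (G g), fun i r => φ (R i r), P⟩ G_P' R_P')
    (hQ' : Terminates opR κR ⟨fun g => φ (G g), fun i r => φ (R i r), Q⟩ G_Q' R_Q') :
    G_P' = G_Q' ∧ R_P' = R_Q' := by
  classical
  obtain ⟨XP, P₁, hcstepsP, hretP⟩ := hP
  obtain ⟨XQ, Q₁, hcstepsQ, hretQ⟩ := hQ
  obtain ⟨nP, hρP⟩ := cstepsN_of_csteps hcstepsP
  obtain ⟨nQ, hρQ⟩ := cstepsN_of_csteps hcstepsQ
  -- transport the symbolic checked runs along φ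
  have ρP : CStepsN opR κR nP
      (.ok (emptyMemEvs t₀) ⟨fun g => φ (G g), fun i r => φ (R i r), P⟩)
      (.ok XP ⟨fun g => φ (G_P g), fun i r => φ (R_P i r), P₁⟩) :=
    cstepsN_map φ hop hκ nP _ _ _ _ hρP
  have ρQ : CStepsN opR κR nQ
      (.ok (emptyMemEvs t₀) ⟨fun g => φ (G g), fun i r => φ (R i r), Q⟩)
      (.ok XQ ⟨fun g => φ (G_Q g), fun i r => φ (R_Q i r), Q₁⟩) :=
    cstepsN_map φ hop hκ nQ _ _ _ _ hρQ
  -- safety of the two starting configurations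
  have hsafeP : ∀ m, ¬ CStepsN opR κR m
      (.ok (emptyMemEvs t₀) ⟨fun g => φ (G g), fun i r => φ (R i r), P⟩) .err := by
    intro m hm
    obtain ⟨Y, G₂, R₂, P₂, habs, _⟩ := global_lemma m nP _ _ _ _ _ _ ρP hretP _ hm
    simp at habs
  have hsafeQ : ∀ m, ¬ CStepsN opR κR m
      (.ok (emptyMemEvs t₀) ⟨fun g => φ (G g), fun i r => φ (R i r), Q⟩) .err := by
    intro m hm
    obtain ⟨Y, G₂, R₂, P₂, habs, _⟩ := global_lemma m nQ _ _ _ _ _ _ ρQ hretQ _ hm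
    simp at habs
  -- lift the real unchecked runs to checked runs
  obtain ⟨P₂, hstepsP, hretP₂⟩ := hP'
  obtain ⟨Q₂, hstepsQ, hretQ₂⟩ := hQ'
  obtain ⟨XP', mP, τP⟩ := lift_run hsafeP _ _ hstepsP (emptyMemEvs t₀) 0 (.refl _)
  obtain ⟨XQ', mQ, τQ⟩ := lift_run hsafeQ _ _ hstepsQ (emptyMemEvs t₀) 0 (.refl _)
  -- uniqueness of the terminal memory and registers
  obtain ⟨Y, G₂, R₂, P₃, heq, himp⟩ := global_lemma mP nP _ _ _ _ _ _ ρP hretP _ τP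
  simp only [CConfig.ok.injEq, Config.mk.injEq] at heq
  obtain ⟨-, hG2, hR2, hP2⟩ := heq
  obtain ⟨hGP, hRP⟩ := himp (by intro i; rw [← hP2]; exact hretP₂ i)
  obtain ⟨Y', G₃, R₃, Q₃, heq', himp'⟩ := global_lemma mQ nQ _ _ _ _ _ _ ρQ hretQ _ τQ
  simp only [CConfig.ok.injEq, Config.mk.injEq] at heq'
  obtain ⟨-, hG3, hR3, hQ3⟩ := heq'
  obtain ⟨hGQ, hRQ⟩ := himp' (by intro i; rw [← hQ3]; exact hretQ₂ i)
  constructor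
  · rw [hG2, hGP, heqG, ← hGQ, ← hG3]
  · rw [hR2, hRP, heqR, ← hRQ, ← hR3]


end Volta
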